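/- Let k be a field of characteristic zero (so that k is canonically a ℚ-algebra) and let A be a commutative k-algebra of finite type. Then there exist an intermediate field m with ℚ ⊆ m ⊆ k which is finitely generated as a field extension of ℚ, and a finite type m-algebra B, together with an isomorphism of k-algebras A ≅ k ⊗_m B. -/

import Mathlib

open TensorProduct

set_option maxHeartbeats 1600000
set_option synthInstance.maxHeartbeats 400000

/-- Auxiliary lemma: if a finite-type `k`-algebra `A` is presented by
`φ : MvPolynomial (Fin n) k →ₐ[k] A`, `B` is an `m`-algebra receiving a surjection
`π` from `MvPolynomial (Fin n) m`, `f : B →ₐ[m] A` is compatible with `φ` and `π`,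
and the kernel of `φ` is generated by polynomials coming from the kernel of `π`,
then `A ≅ k ⊗[m] B` as `k`-algebras. -/
theorem descend_aux {k : Type} [Field k] [CharZero k] {m : IntermediateField ℚ k}
    {A : Type} [CommRing A] [Algebra k A] {B : Type} [CommRing B] [Algebra m B]
    {n : ℕ} (φ : MvPolynomial (Fin n) k →ₐ[k] A) (hφ : Function.Surjective φ)
    (π : MvPolynomial (Fin n) m →ₐ[m] B) (hπ : Function.Surjective π)
    (f : B →ₐ[m] A) (hf : ∀ p, f (π p) = φ (MvPolynomial.map (algebraMap m k) p))
    (hker : (RingHom.ker φ : Set (MvPolynomial (Fin n) k)) ⊆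
      ↑(Ideal.span ((MvPolynomial.map (algebraMap m k)) ''
          (RingHom.ker π : Set (MvPolynomial (Fin n) m))))) :
    Nonempty (A ≃ₐ[k] k ⊗[m] B) := by
  classical
  set ψ : k ⊗[m] B →ₐ[k] A :=
    Algebra.TensorProduct.lift (Algebra.ofId k A) f (fun x y => Commute.all _ _) with hψ
  have hψtmul : ∀ (c : k) (b : B), ψ (c ⊗ₜ[m] b) = algebraMap k A c * f b := by
    intro c b
    rw [hψ, Algebra.TensorProduct.lift_tmul]
    rfl
  set χ₀ : MvPolynomial (Fin n) k →ₐ[k] k ⊗[m] B :=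
    MvPolynomial.aeval (fun i => (1 : k) ⊗ₜ[m] π (MvPolynomial.X i)) with hχ₀
  have key : ∀ p : MvPolynomial (Fin n) m,
      χ₀ (MvPolynomial.map (algebraMap m k) p) = (1 : k) ⊗ₜ[m] π p := by
    have h2 : ((χ₀.restrictScalars m).comp
          (MvPolynomial.mapAlgHom (R := m) (Algebra.ofId m k))) =
        ((Algebra.TensorProduct.includeRight : B →ₐ[m] k ⊗[m] B).comp π) := by
      apply MvPolynomial.algHom_ext
      intro i
      simp [hχ₀, MvPolynomial.mapAlgHom_apply]
      rfl
    intro p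
    have := congrArg (fun F => F p) (congrArg DFunLike.coe h2)
    simp only [MvPolynomial.mapAlgHom_apply, Algebra.ofId] at this
    exact this
  have hIker : ∀ x ∈ RingHom.ker φ, χ₀ x = 0 := by
    intro x hx
    have hx' := hker hx
    refine Submodule.span_induction ?_ ?_ ?_ ?_ hx'
    · rintro _ ⟨p, hp, rfl⟩
      rw [key]
      have : π p = 0 := hp
      rw [this, TensorProduct.tmul_zero]
    · simp
    · intro a b _ _ ha hb; rw [map_add, ha, hb, add_zero]
    · intro c a _ ha; rw [smul_eq_mul, map_mul, ha, mul_zero]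
  set e₁ : (MvPolynomial (Fin n) k ⧸ RingHom.ker φ) ≃ₐ[k] A :=
    Ideal.quotientKerAlgEquivOfSurjective hφ with he₁
  have he₁mk : ∀ q, e₁ (Ideal.Quotient.mk (RingHom.ker φ) q) = φ q := by
    intro q
    simp only [he₁, Ideal.quotientKerAlgEquivOfSurjective_apply]
    exact RingHom.kerLift_mk (φ : MvPolynomial (Fin n) k →+* A) q
  set χ : A →ₐ[k] k ⊗[m] B :=
    (Ideal.Quotient.liftₐ (RingHom.ker φ) χ₀ hIker).comp e₁.symm.toAlgHom with hχ
  have hχφ : ∀ q, χ (φ q) = χ₀ q := by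
    intro q
    have h : e₁.symm (φ q) = Ideal.Quotient.mk (RingHom.ker φ) q := by
      rw [AlgEquiv.symm_apply_eq, he₁mk]
    simp [hχ, h]
    rfl
  have hψχ₀ : ∀ q, ψ (χ₀ q) = φ q := by
    have h : (ψ.comp χ₀ : MvPolynomial (Fin n) k →ₐ[k] A) = φ := by
      apply MvPolynomial.algHom_ext
      intro i
      simp only [AlgHom.coe_comp, Function.comp_apply, hχ₀, MvPolynomial.aeval_X]
      rw [hψtmul, map_one, one_mul, hf, MvPolynomial.map_X]
    intro q; exact congrArg (fun F => F q) (congrArg DFunLike.coe h)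
  have hsurj : Function.Surjective ψ := by
    intro a
    obtain ⟨q, rfl⟩ := hφ a
    exact ⟨χ₀ q, hψχ₀ q⟩
  have hinj : Function.Injective ψ := by
    have hleft : ∀ x : k ⊗[m] B, χ (ψ x) = x := by
      intro x
      induction x with
      | zero => simp
      | tmul c b =>
        obtain ⟨p, rfl⟩ := hπ b
        rw [hψtmul, hf, map_mul, AlgHom.commutes, hχφ, key]
        rw [Algebra.TensorProduct.algebraMap_apply, Algebra.TensorProduct.tmul_mul_tmul,
          mul_one, one_mul]
        rfl
      | add x y hx hy => rw [map_add, map_add, hx, hy]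
    intro x y hxy
    have h := congrArg χ hxy
    rwa [hleft, hleft] at h
  exact ⟨(AlgEquiv.ofBijective ψ ⟨hinj, hsurj⟩).symm⟩

/-- **Theorem 3.1 (affine form).**
Let `k` be a field of characteristic zero and `A` a commutative `k`-algebra of finite
type.  Then there is an intermediate field `ℚ ⊆ m ⊆ k`, finitely generated as a field
extension of `ℚ`, and a finite type `m`-algebra `B` such that `A ≅ k ⊗_m B` as
`k`-algebras. -/
theorem descend_finiteType_algebra_to_finitely_generated_subfield_of_rat
    {k : Type} [Field k] [CharZero k]
    (A : Type) [CommRing A] [Algebra k A] [Algebra.FiniteType k A] :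
    ∃ m : IntermediateField ℚ k, m.FG ∧
      ∃ (B : Type) (cB : CommRing B),
        letI : CommRing B := cB
        ∃ aB : Algebra m B,
          letI : Algebra m B := aB
          Algebra.FiniteType m B ∧ Nonempty (A ≃ₐ[k] (k ⊗[m] B)) := by
  classical
  obtain ⟨n, φ, hφ⟩ :=
    Algebra.FiniteType.iff_quotient_mvPolynomial''.mp (inferInstance : Algebra.FiniteType k A)
  obtain ⟨s, hs⟩ : (RingHom.ker φ).FG := IsNoetherian.noetherian (RingHom.ker φ)
  -- the finite set of coefficients
  set S : Finset k := s.biUnion (fun g => g.support.image fun d => MvPolynomial.coeff d g) with hS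
  set m : IntermediateField ℚ k := IntermediateField.adjoin ℚ (S : Set k) with hm
  have hcoeff : ∀ g ∈ s, ∀ d, MvPolynomial.coeff d g ∈ m := by
    intro g hg d
    by_cases hd : d ∈ g.support
    · exact IntermediateField.subset_adjoin ℚ (S : Set k)
        (by
          simp only [hS, Finset.coe_biUnion, Set.mem_iUnion, Finset.coe_image, Set.mem_image]
          exact ⟨g, hg, d, hd, rfl⟩)
    · rw [MvPolynomial.notMem_support_iff.mp hd]; exact zero_mem m
  -- restriction of coefficients
  set restr : MvPolynomial (Fin n) k → MvPolynomial (Fin n) m := fun p =>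
    ∑ d ∈ p.support, MvPolynomial.monomial d
      (if h : MvPolynomial.coeff d p ∈ m then (⟨MvPolynomial.coeff d p, h⟩ : m) else 0) with hrestr
  have hmap : ∀ g ∈ s, MvPolynomial.map (algebraMap m k) (restr g) = g := by
    intro g hg
    rw [hrestr]
    simp only
    rw [map_sum]
    have h : ∀ d ∈ g.support,
        (MvPolynomial.map (algebraMap m k))
          (MvPolynomial.monomial d
            (if h : MvPolynomial.coeff d g ∈ m then (⟨MvPolynomial.coeff d g, h⟩ : m) else 0)) =
        MvPolynomial.monomial d (MvPolynomial.coeff d g) := by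
      intro d _
      rw [MvPolynomial.map_monomial, dif_pos (hcoeff g hg d)]
      rfl
    rw [Finset.sum_congr rfl h, MvPolynomial.support_sum_monomial_coeff]
  set J : Ideal (MvPolynomial (Fin n) m) := Ideal.span (restr '' ↑s) with hJ
  -- the m-algebra map P_m →ₐ[m] A
  set φ' : MvPolynomial (Fin n) m →ₐ[m] A :=
    (φ.restrictScalars m).comp (MvPolynomial.mapAlgHom (Algebra.ofId m k)) with hφ'
  have hφ'apply : ∀ p : MvPolynomial (Fin n) m,
      φ' p = φ (MvPolynomial.map (algebraMap m k) p) := by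
    intro p
    simp [hφ', MvPolynomial.mapAlgHom_apply, Algebra.ofId]
  have hJker : ∀ x ∈ J, φ' x = 0 := by
    have hle : J ≤ RingHom.ker φ' := by
      rw [hJ, Ideal.span_le]
      rintro _ ⟨g, hg, rfl⟩
      simp only [SetLike.mem_coe, RingHom.mem_ker]
      rw [hφ'apply, hmap g hg]
      have : g ∈ RingHom.ker φ := hs ▸ Ideal.subset_span hg
      exact this
    intro x hx
    exact hle hx
  refine ⟨m, ⟨S, rfl⟩, MvPolynomial (Fin n) m ⧸ J, inferInstance, inferInstance, ?_, ?_⟩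
  · exact Algebra.FiniteType.of_surjective
      (Ideal.Quotient.mkₐ m J) (Ideal.Quotient.mkₐ_surjective m J)
  · refine descend_aux φ hφ (Ideal.Quotient.mkₐ m J) (Ideal.Quotient.mkₐ_surjective m J)
      (Ideal.Quotient.liftₐ J φ' hJker) ?_ ?_
    · intro p
      rw [Ideal.Quotient.mkₐ_eq_mk, Ideal.Quotient.liftₐ_apply]
      exact hφ'apply p
    · intro x hx
      rw [SetLike.mem_coe, ← hs] at hx
      have hsub : (s : Set (MvPolynomial (Fin n) k)) ⊆
          ↑(Ideal.span ((MvPolynomial.map (algebraMap m k)) ''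
            (RingHom.ker (Ideal.Quotient.mkₐ m J) : Set (MvPolynomial (Fin n) m)))) := by
        intro g hg
        refine Ideal.subset_span ⟨restr g, ?_, hmap g hg⟩
        simp only [SetLike.mem_coe, RingHom.mem_ker, Ideal.Quotient.mkₐ_eq_mk]
        exact Ideal.Quotient.eq_zero_iff_mem.mpr (Ideal.subset_span ⟨g, hg, rfl⟩)
      exact Ideal.span_le.mpr hsub (hs ▸ hx)
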